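/- Suppose every road in the abstract road graph G is a path and a label ℓ labels road section e and a stub e' of the same road R across a junction edge j. Then either (a) both e and e' are labeled by other labels of an optimal labeling, in which case removing ℓ keeps the same set of labeled sections; or (b) ℓ can be replaced by labels fully contained in e and (if needed) in e', preserving the number of labeled road sections. In both cases the junction edge j can be removed while preserving the optimal value of MaxTotalCovering. -/

import Mathlib

open Classical
noncomputable section

/-- An abstract road graph: a (multi)graph with directed edge incidences,
a partition of edges into road sections (`isRS`) and junction edges,
a road assignment, and a positive length for each edge. -/
structure RoadGraph (V E : Type) where
  inc : E → V × V
  isRS : E → Prop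
  road : E → ℕ
  len : E → ℝ
  len_pos : ∀ e, 0 < len e

namespace RoadGraph

variable {V E : Type}

/-- A (candidate) label: the path of covered edges together with the head
offset `s` on the first edge and the tail offset `t` on the last edge. -/
structure Lab (E : Type) where
  path : List E
  s : ℝ
  t : ℝ

/-- The internal (completely covered) edges of a label. -/
def Lab.interiorEdges (ℓ : Lab E) : List E := (ℓ.path.drop 1).dropLast

/-- The set of covered positions of a label on an edge `e`. -/
noncomputable def coveredSet (G : RoadGraph V E) (ℓ : Lab E) (e : E) : Set ℝ :=
  if ℓ.path.length = 1 then (if ℓ.path = [e] then Set.Icc ℓ.s ℓ.t else ∅)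
  else if ℓ.path.head? = some e then Set.Icc ℓ.s (G.len e)
  else if ℓ.path.getLast? = some e then Set.Icc 0 ℓ.t
  else if e ∈ ℓ.path then Set.Icc 0 (G.len e) else ∅

/-- The length of the curve described by a label. -/
noncomputable def labLength (G : RoadGraph V E) (ℓ : Lab E) : ℝ :=
  match ℓ.path with
  | [] => 0
  | [e] => ℓ.t - ℓ.s
  | e :: rest => (G.len e - ℓ.s) + ((rest.dropLast).map G.len).sum + ℓ.t

/-- Validity of a label w.r.t. the road graph `G` and the road-name lengths `lam`:
the covered edges form a nonempty simple directed path of edges of one road,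
the label starts and ends on road sections with offsets inside the edges,
and the total length equals the name length of the road. -/
def Valid (G : RoadGraph V E) (lam : ℕ → ℝ) (ℓ : Lab E) : Prop :=
  ℓ.path ≠ [] ∧ ℓ.path.Nodup ∧
  List.Chain' (fun e f => (G.inc e).2 = (G.inc f).1) ℓ.path ∧
  (∀ e ∈ ℓ.path, ∀ f ∈ ℓ.path, G.road e = G.road f) ∧
  (∀ e, ℓ.path.head? = some e → G.isRS e ∧ 0 ≤ ℓ.s ∧ ℓ.s ≤ G.len e) ∧
  (∀ e, ℓ.path.getLast? = some e → G.isRS e ∧ 0 ≤ ℓ.t ∧ ℓ.t ≤ G.len e) ∧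
  (ℓ.path.length = 1 → ℓ.s ≤ ℓ.t) ∧
  (∀ e, ℓ.path.head? = some e → labLength G ℓ = lam (G.road e))

/-- `(e, x)` is the head or the tail point of the label `ℓ`. -/
def isEndPt (ℓ : Lab E) (e : E) (x : ℝ) : Prop :=
  (ℓ.path.head? = some e ∧ x = ℓ.s) ∨ (ℓ.path.getLast? = some e ∧ x = ℓ.t)

/-- Two labels overlap if they share a point that is not the head/tail of both. -/
def Overlap (G : RoadGraph V E) (ℓ ℓ' : Lab E) : Prop :=
  ∃ e x, x ∈ coveredSet G ℓ e ∧ x ∈ coveredSet G ℓ' e ∧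
    ¬(isEndPt ℓ e x ∧ isEndPt ℓ' e x)

/-- A labeling: a set of valid, well-shaped, mutually non-overlapping labels. -/
def IsLabeling (G : RoadGraph V E) (lam : ℕ → ℝ) (WS : Lab E → Prop)
    (L : Set (Lab E)) : Prop :=
  (∀ ℓ ∈ L, Valid G lam ℓ ∧ WS ℓ) ∧
  (∀ ℓ ∈ L, ∀ ℓ' ∈ L, ℓ ≠ ℓ' → ¬ Overlap G ℓ ℓ')

/-- The set of road sections labeled by a set of labels. -/
def labeledSecs (G : RoadGraph V E) (L : Set (Lab E)) : Set E :=
  {e | G.isRS e ∧ ∃ ℓ ∈ L, e ∈ ℓ.path}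

/-- The number of labeled road sections. -/
noncomputable def countLabeled (G : RoadGraph V E) (L : Set (Lab E)) : ℕ :=
  (labeledSecs G L).ncard

/-- An optimal labeling: a solution of MaxTotalCovering. -/
def Optimal (G : RoadGraph V E) (lam : ℕ → ℝ) (WS : Lab E → Prop)
    (L : Set (Lab E)) : Prop :=
  IsLabeling G lam WS L ∧
  ∀ L', IsLabeling G lam WS L' → countLabeled G L' ≤ countLabeled G L

/-- A well-shaped label fits entirely on the road section `e`. -/
def Stub (G : RoadGraph V E) (lam : ℕ → ℝ) (WS : Lab E → Prop) (e : E) : Prop :=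
  G.isRS e ∧ ∃ ℓ : Lab E, Valid G lam ℓ ∧ WS ℓ ∧ ℓ.path = [e]

/-- Edge `e` is incident to vertex `v`. -/
def incident (G : RoadGraph V E) (e : E) (v : V) : Prop :=
  (G.inc e).1 = v ∨ (G.inc e).2 = v

/-- One step through a junction edge. -/
def JStep (G : RoadGraph V E) (v w : V) : Prop :=
  ∃ f, ¬ G.isRS f ∧ ((G.inc f) = (v, w) ∨ (G.inc f) = (w, v))

/-- Reachability through junction edges only. -/
def JReach (G : RoadGraph V E) : V → V → Prop := Relation.ReflTransGen (JStep G)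

/-- `Re G e u`: road sections of the road of `e` reachable from `u`
when traversing junction edges only. -/
def Re (G : RoadGraph V E) (e : E) (u : V) : Set E :=
  {e' | G.isRS e' ∧ G.road e' = G.road e ∧ ∃ v, JReach G u v ∧ incident G e' v}

end RoadGraph


open RoadGraph in
lemma aux_cs_empty {V E : Type} (G : RoadGraph V E) {m : Lab E} {x : E}
    (hx : x ∉ m.path) : coveredSet G m x = ∅ := by
  have hh : m.path.head? ≠ some x := fun hh => hx (List.mem_of_mem_head? (Option.mem_def.mpr hh))
  have hl : m.path.getLast? ≠ some x := fun hh => hx (List.mem_of_mem_getLast? hh)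
  have hp : m.path ≠ [x] := fun hh => hx (by rw [hh]; exact List.mem_singleton_self x)
  unfold coveredSet
  by_cases h1 : m.path.length = 1
  · rw [if_pos h1, if_neg hp]
  · rw [if_neg h1, if_neg hh, if_neg hl, if_neg hx]

open RoadGraph in
lemma aux_cs_single {V E : Type} (G : RoadGraph V E) {ℓ0 : Lab E} {x f : E}
    (hp : ℓ0.path = [x]) (hfx : f ≠ x) : coveredSet G ℓ0 f = ∅ := by
  unfold coveredSet
  rw [hp]
  simp [Ne.symm hfx]

open RoadGraph in
lemma aux_single_no_overlap {V E : Type} (G : RoadGraph V E) {ℓ0 m : Lab E} {x : E}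
    (hp : ℓ0.path = [x]) (hx : x ∉ m.path) :
    ¬ Overlap G ℓ0 m ∧ ¬ Overlap G m ℓ0 := by
  constructor
  · rintro ⟨f, y, hy1, hy2, -⟩
    by_cases hfx : f = x
    · subst hfx; rw [aux_cs_empty G hx] at hy2; simpa using hy2
    · rw [aux_cs_single G hp hfx] at hy1; simpa using hy1
  · rintro ⟨f, y, hy1, hy2, -⟩
    by_cases hfx : f = x
    · subst hfx; rw [aux_cs_empty G hx] at hy1; simpa using hy1
    · rw [aux_cs_single G hp hfx] at hy2; simpa using hy2

open RoadGraph in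
lemma aux_stub_len {V E : Type} (G : RoadGraph V E) (lam : ℕ → ℝ) (WS : Lab E → Prop)
    {x : E} (h : Stub G lam WS x) :
    0 ≤ lam (G.road x) ∧ lam (G.road x) ≤ G.len x := by
  obtain ⟨-, ℓ0, hv, -, hp⟩ := h
  obtain ⟨pa, s0, t0⟩ := ℓ0
  change pa = [x] at hp
  subst hp
  obtain ⟨-, -, -, -, hh, hl, hst, hlen⟩ := hv
  obtain ⟨-, hs0, hs1⟩ := hh x rfl
  obtain ⟨-, ht0, ht1⟩ := hl x (by simp)
  have h1 : s0 ≤ t0 := hst rfl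
  have h2 : t0 - s0 = lam (G.road x) := hlen x rfl
  constructor <;> linarith

open RoadGraph in
lemma aux_labLength2 {V E : Type} (G : RoadGraph V E) (ℓ : Lab E) {h l : E}
    {mid : List E} (hmid : mid ≠ []) (hp : ℓ.path = h :: (mid ++ [l])) :
    labLength G ℓ = (G.len h - ℓ.s) + ((mid.map G.len)).sum + ℓ.t := by
  obtain ⟨b, mid', rfl⟩ : ∃ b m', mid = b :: m' :=
    ⟨mid.head hmid, mid.tail, (List.cons_head_tail hmid).symm⟩
  rw [List.cons_append] at hp
  obtain ⟨pa, s0, t0⟩ := ℓ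
  change pa = _ at hp
  subst hp
  show (G.len h - s0) + (((b :: (mid' ++ [l])).dropLast).map G.len).sum + t0 = _
  rw [← List.cons_append, List.dropLast_concat]

open RoadGraph in
lemma aux_reach_fwd {V E : Type} (G : RoadGraph V E) (u : V) :
    ∀ (q : List E) (v : V), JReach G u v →
    (∀ y, q.head? = some y → (G.inc y).1 = v) →
    List.Chain' (fun x y => (G.inc x).2 = (G.inc y).1) q →
    (∃ x ∈ q, G.isRS x) →
    ∃ x₀ ∈ q, G.isRS x₀ ∧ ∃ w, JReach G u w ∧ incident G x₀ w := by
  intro q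
  induction q with
  | nil => rintro v - - - ⟨x, hx, -⟩; exact absurd hx List.not_mem_nil
  | cons c q' ih =>
    rintro v hreach hhead hchain ⟨x, hx, hRS⟩
    by_cases hc : G.isRS c
    · exact ⟨c, List.mem_cons_self, hc, v, hreach, Or.inl (hhead c rfl)⟩
    · have hx' : x ∈ q' := by
        rcases List.mem_cons.1 hx with h1 | h1
        · exact absurd (h1 ▸ hRS) hc
        · exact h1
      have hv : (G.inc c).1 = v := hhead c rfl
      have hstep : JStep G v (G.inc c).2 :=
        ⟨c, hc, Or.inl (by rw [← hv])⟩
      have hcc := List.isChain_cons.1 hchain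
      obtain ⟨x₀, hx₀, hRS₀, w, hw⟩ :=
        ih (G.inc c).2 (hreach.tail hstep)
          (fun y hy => (hcc.1 y (by simp [hy])).symm) hcc.2 ⟨x, hx', hRS⟩
      exact ⟨x₀, List.mem_cons_of_mem c hx₀, hRS₀, w, hw⟩

open RoadGraph in
lemma aux_reach_bwd {V E : Type} (G : RoadGraph V E) (u : V) :
    ∀ (q : List E) (v : V), JReach G u v →
    (∀ y, q.getLast? = some y → (G.inc y).2 = v) →
    List.Chain' (fun x y => (G.inc x).2 = (G.inc y).1) q →
    (∃ x ∈ q, G.isRS x) →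
    ∃ x₀ ∈ q, G.isRS x₀ ∧ ∃ w, JReach G u w ∧ incident G x₀ w := by
  intro q
  induction q using List.reverseRecOn with
  | nil => rintro v - - - ⟨x, hx, -⟩; exact absurd hx List.not_mem_nil
  | append_singleton q' c ih =>
    rintro v hreach hlast hchain ⟨x, hx, hRS⟩
    by_cases hc : G.isRS c
    · exact ⟨c, by simp, hc, v, hreach, Or.inr (hlast c List.getLast?_concat)⟩
    · have hx' : x ∈ q' := by
        rcases List.mem_append.1 hx with h1 | h1
        · exact h1
        · exact absurd ((List.mem_singleton.1 h1) ▸ hRS) hc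
      have hv : (G.inc c).2 = v := hlast c List.getLast?_concat
      have hstep : JStep G v (G.inc c).1 :=
        ⟨c, hc, Or.inr (by rw [← hv])⟩
      have hca := List.isChain_append.1 hchain
      obtain ⟨x₀, hx₀, hRS₀, w, hw⟩ :=
        ih (G.inc c).1 (hreach.tail hstep)
          (fun y hy => hca.2.2 y (by simp [hy]) c (by simp)) hca.1 ⟨x, hx', hRS⟩
      exact ⟨x₀, List.mem_append_left _ hx₀, hRS₀, w, hw⟩

open RoadGraph in
lemma aux_cs_inner {V E : Type} (G : RoadGraph V E) {m : Lab E} {j : E}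
    (h1 : m.path.length ≠ 1) (h2 : m.path.head? ≠ some j)
    (h3 : m.path.getLast? ≠ some j) (h4 : j ∈ m.path) :
    coveredSet G m j = Set.Icc 0 (G.len j) := by
  unfold coveredSet
  rw [if_neg h1, if_neg h2, if_neg h3, if_pos h4]

open RoadGraph in
/-- Rule 4 correctness. If every road is a path and a label
`ℓ` of an optimal labeling labels a road section `e` and a stub `e'` of the same
road across a junction edge `j` (all other same-road sections reachable from `u`
being stubs), then either (a) both `e` and `e'` are also labeled by other labels
and removing `ℓ` keeps the same labeled sections, or (b) `ℓ` can be replaced by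
labels fully contained in `e` and (if needed) `e'`, preserving the number of
labeled road sections; in both cases the junction edge `j` can be removed while
preserving the optimal value of MaxTotalCovering. -/
theorem stmt14 {V E : Type} (G : RoadGraph V E) (lam : ℕ → ℝ) (WS : Lab E → Prop)
    (hpaths : ∀ r : ℕ, ∃ p : List E, p.Nodup ∧ (∀ e, G.road e = r ↔ e ∈ p) ∧
      List.Chain' (fun e f => ∃ v, incident G e v ∧ incident G f v) p)
    (L : Set (Lab E)) (hopt : Optimal G lam WS L)
    (ℓ : Lab E) (hℓ : ℓ ∈ L)
    (e e' j : E) (u : V)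
    (hrs : G.isRS e) (hstub_e : Stub G lam WS e)
    (hj : ¬ G.isRS j) (heu : incident G e u) (hju : incident G j u)
    (hstubs : ∀ e'' ∈ Re G e u, e'' ≠ e → Stub G lam WS e'')
    (he' : e' ∈ Re G e u) (he'ne : e' ≠ e)
    (hcov : e ∈ ℓ.path ∧ j ∈ ℓ.path ∧ e' ∈ ℓ.path) :
    (((∃ m ∈ L, m ≠ ℓ ∧ e ∈ m.path) ∧ (∃ m ∈ L, m ≠ ℓ ∧ e' ∈ m.path) ∧
        labeledSecs G (L \ {ℓ}) = labeledSecs G L) ∨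
      (∃ L' : Set (Lab E), IsLabeling G lam WS L' ∧
        (∀ m ∈ L', m ∈ L \ {ℓ} ∨ m.path = [e] ∨ m.path = [e']) ∧
        countLabeled G L' = countLabeled G L)) ∧
    (∃ L'' : Set (Lab E), IsLabeling G lam WS L'' ∧
      countLabeled G L'' = countLabeled G L ∧ ∀ m ∈ L'', j ∉ m.path) := by
  have hval := hopt.1.1
  have hnoov := hopt.1.2
  obtain ⟨hce, hcj, hce'⟩ := hcov
  obtain ⟨hpne, hnodup, hchain, hsame, hhead, hlast, -, hlen⟩ := (hval ℓ hℓ).1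
  -- shape of ℓ.path
  obtain ⟨h, q, hpa0⟩ : ∃ h q, ℓ.path = h :: q :=
    ⟨ℓ.path.head hpne, ℓ.path.tail, (List.cons_head_tail hpne).symm⟩
  have hqne : q ≠ [] := by
    rintro rfl
    rw [hpa0] at hce hce'
    simp at hce hce'
    exact he'ne (hce'.trans hce.symm)
  obtain ⟨mid, l, rfl⟩ : ∃ mid l, q = mid ++ [l] :=
    ⟨q.dropLast, q.getLast hqne, (List.dropLast_append_getLast hqne).symm⟩
  have hpa : ℓ.path = h :: (mid ++ [l]) := hpa0
  have hheadq : ℓ.path.head? = some h := by rw [hpa]; rfl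
  have hlastq : ℓ.path.getLast? = some l := by
    rw [hpa, ← List.cons_append]; exact List.getLast?_concat
  obtain ⟨hRSh, hs0, hs1⟩ := hhead h hheadq
  obtain ⟨hRSl, ht0, ht1⟩ := hlast l hlastq
  have hjmid : j ∈ mid := by
    rw [hpa] at hcj
    rcases List.mem_cons.1 hcj with h1 | h1
    · exact absurd (by rw [← h1] at hRSh; exact hRSh) hj
    · rcases List.mem_append.1 h1 with h2 | h2
      · exact h2
      · have h3 : j = l := by simpa using h2
        exact absurd (by rw [h3]; exact hRSl) hj
  have hmidne : mid ≠ [] := List.ne_nil_of_mem hjmid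
  have hLL := aux_labLength2 G ℓ hmidne hpa
  have hlamr : labLength G ℓ = lam (G.road e) := by
    have h1 := hlen h hheadq
    rw [hsame h (by rw [hpa]; simp) e hce] at h1
    exact h1
  have hS : (mid.map G.len).sum ≤ lam (G.road e) := by
    rw [hlamr] at hLL; linarith
  have hstubE := aux_stub_len G lam WS hstub_e
  -- no interior edge can accommodate the label
  have hint : ∀ x ∈ mid, x ≠ j → lam (G.road e) ≤ G.len x → False := by
    intro x hx hxj hxlen
    have h1 : (mid.map G.len).sum = G.len j + ((mid.erase j).map G.len).sum := by
      have hp := (List.perm_cons_erase hjmid).map G.len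
      have := hp.sum_eq
      simpa using this
    have hxe : x ∈ mid.erase j := (List.mem_erase_of_ne hxj).2 hx
    have h2 : G.len x ≤ ((mid.erase j).map G.len).sum :=
      List.single_le_sum
        (by rintro y hy; obtain ⟨z, hz, rfl⟩ := List.mem_map.1 hy; exact (G.len_pos z).le)
        _ (List.mem_map_of_mem hxe)
    have h3 := G.len_pos j
    linarith
  -- both endpoints of j are junction-reachable from u
  have hjreach : JReach G u (G.inc j).1 ∧ JReach G u (G.inc j).2 := by
    rcases hju with h1 | h1
    · exact ⟨h1 ▸ Relation.ReflTransGen.refl,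
        Relation.ReflTransGen.tail Relation.ReflTransGen.refl
          ⟨j, hj, Or.inl (by rw [← h1])⟩⟩
    · exact ⟨Relation.ReflTransGen.tail Relation.ReflTransGen.refl
          ⟨j, hj, Or.inr (by rw [← h1])⟩,
        h1 ▸ Relation.ReflTransGen.refl⟩
  -- all interior edges are junction edges
  have hmidJ : ∀ x ∈ mid, ¬ G.isRS x := by
    intro x hx hRSx
    obtain ⟨m1, m2, hm⟩ := List.append_of_mem hjmid
    have hfin : ∀ x₀, x₀ ∈ mid → G.isRS x₀ →
        (∃ w, JReach G u w ∧ incident G x₀ w) → False := by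
      intro x₀ hx₀mid hRS₀ ⟨w, hwreach, hwinc⟩
      have hroad : G.road x₀ = G.road e :=
        hsame x₀ (by rw [hpa]; simp; right; left; exact hx₀mid) e hce
      have hx₀j : x₀ ≠ j := fun hh => hj (hh ▸ hRS₀)
      by_cases hx₀e : x₀ = e
      · exact hint x₀ hx₀mid hx₀j (by rw [hx₀e]; exact hstubE.2)
      · have hstub := hstubs x₀ ⟨hRS₀, hroad, w, hwreach, hwinc⟩ hx₀e
        have hb := (aux_stub_len G lam WS hstub).2
        rw [hroad] at hb
        exact hint x₀ hx₀mid hx₀j hb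
    have hxsplit : x ∈ m1 ∨ x = j ∨ x ∈ m2 := by
      rw [hm] at hx; simpa using hx
    rcases hxsplit with h1 | h1 | h1
    · -- use backward reach through the junction run ending at j
      have hinf : (m1 ++ [j]) <:+: ℓ.path :=
        ⟨[h], m2 ++ [l], by rw [hpa, hm]; simp⟩
      have hc1 : List.Chain' (fun a b => (G.inc a).2 = (G.inc b).1) (m1 ++ [j]) :=
        hchain.infix hinf
      have hca := List.isChain_append.1 hc1
      obtain ⟨x₀, hx₀, hRS₀, w, hw⟩ :=
        aux_reach_bwd G u m1 (G.inc j).1 hjreach.1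
          (fun y hy => hca.2.2 y (by simp [hy]) j (by simp))
          hca.1 ⟨x, h1, hRSx⟩
      exact hfin x₀ (by rw [hm]; exact List.mem_append_left _ hx₀) hRS₀ ⟨w, hw⟩
    · exact hj (h1 ▸ hRSx)
    · have hinf : (j :: m2) <:+: ℓ.path :=
        ⟨h :: m1, [l], by rw [hpa, hm]; simp⟩
      have hc2 : List.Chain' (fun a b => (G.inc a).2 = (G.inc b).1) (j :: m2) :=
        hchain.infix hinf
      have hcc := List.isChain_cons.1 hc2
      obtain ⟨x₀, hx₀, hRS₀, w, hw⟩ :=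
        aux_reach_fwd G u m2 (G.inc j).2 hjreach.2
          (fun y hy => (hcc.1 y (by simp [hy])).symm) hcc.2 ⟨x, h1, hRSx⟩
      exact hfin x₀ (by rw [hm]; exact List.mem_append_right _ (List.mem_cons_of_mem _ hx₀))
        hRS₀ ⟨w, hw⟩
  -- the only road sections on ℓ.path are e and e'
  have hRSmem : ∀ x ∈ ℓ.path, G.isRS x → x = e ∨ x = e' := by
    have hends : ∀ x ∈ ℓ.path, G.isRS x → x = h ∨ x = l := by
      intro x hx hRSx
      rw [hpa] at hx
      rcases List.mem_cons.1 hx with h1 | h1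
      · exact Or.inl h1
      · rcases List.mem_append.1 h1 with h2 | h2
        · exact absurd hRSx (hmidJ x h2)
        · exact Or.inr (by simpa using h2)
    have heh := hends e hce hrs
    have he'h := hends e' hce' he'.1
    have hhl : (h = e ∧ l = e') ∨ (h = e' ∧ l = e) := by
      rcases heh with h1 | h1 <;> rcases he'h with h2 | h2
      · exact absurd (h2.trans h1.symm) he'ne
      · exact Or.inl ⟨h1.symm, h2.symm⟩
      · exact Or.inr ⟨h2.symm, h1.symm⟩
      · exact absurd (h2.trans h1.symm) he'ne
    intro x hx hRSx
    rcases hends x hx hRSx with h1 | h1 <;> rcases hhl with ⟨h2, h3⟩ | ⟨h2, h3⟩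
    · exact Or.inl (h1.trans h2)
    · exact Or.inr (h1.trans h2)
    · exact Or.inr (h1.trans h3)
    · exact Or.inl (h1.trans h3)
  -- no other label of L covers j
  have hcsj : ∀ m ∈ L, j ∈ m.path → m = ℓ := by
    intro m hm hjm
    by_contra hne
    apply hnoov ℓ hℓ m hm (fun hh => hne hh.symm)
    have hv := (hval m hm).1
    have hne1 : m.path.length ≠ 1 := by
      intro h1
      obtain ⟨a, ha⟩ := List.length_eq_one_iff.1 h1
      have h2 : j = a := by rw [ha] at hjm; simpa using hjm
      subst h2
      exact hj (hv.2.2.2.2.1 j (by rw [ha]; rfl)).1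
    have hh2 : m.path.head? ≠ some j := fun hh => hj (hv.2.2.2.2.1 j hh).1
    have hl2 : m.path.getLast? ≠ some j := fun hh => hj (hv.2.2.2.2.2.1 j hh).1
    have hlen1 : ℓ.path.length ≠ 1 := by
      rw [hpa]; simp
    have hh1 : ℓ.path.head? ≠ some j := by
      rw [hheadq]; intro hh
      exact hj ((Option.some.injEq _ _ ▸ hh : h = j) ▸ hRSh)
    have hl1 : ℓ.path.getLast? ≠ some j := by
      rw [hlastq]; intro hh
      exact hj ((Option.some.injEq _ _ ▸ hh : l = j) ▸ hRSl)
    refine ⟨j, 0, ?_, ?_, ?_⟩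
    · rw [aux_cs_inner G hlen1 hh1 hl1 (by rw [hpa]; simp [hjmid])]
      exact ⟨le_refl 0, (G.len_pos j).le⟩
    · rw [aux_cs_inner G hne1 hh2 hl2 hjm]
      exact ⟨le_refl 0, (G.len_pos j).le⟩
    · rintro ⟨hA, -⟩
      rcases hA with ⟨hA1, -⟩ | ⟨hA1, -⟩
      · exact hh1 hA1
      · exact hl1 hA1
  obtain ⟨-, ℓe, hve, hwse, hpe⟩ := hstub_e
  obtain ⟨-, ℓe', hve', hwse', hpe'⟩ := hstubs e' he' he'ne
  set Pe := ∃ m' ∈ L, m' ≠ ℓ ∧ e ∈ m'.path with hPedef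
  set Pe' := ∃ m' ∈ L, m' ≠ ℓ ∧ e' ∈ m'.path with hPe'def
  set L' : Set (Lab E) :=
    {m | (m ∈ L ∧ m ≠ ℓ) ∨ (m = ℓe ∧ ¬Pe) ∨ (m = ℓe' ∧ ¬Pe')} with hL'def
  have hmemL' : ∀ m, m ∈ L' ↔
      ((m ∈ L ∧ m ≠ ℓ) ∨ (m = ℓe ∧ ¬Pe) ∨ (m = ℓe' ∧ ¬Pe')) := fun m => Iff.rfl
  have hee' : e ∉ ℓe'.path := by rw [hpe']; simp; exact fun hh => he'ne hh.symm
  have he'e : e' ∉ ℓe.path := by rw [hpe]; simp; exact he'ne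
  have hlab' : IsLabeling G lam WS L' := by
    constructor
    · intro m hm
      rcases (hmemL' m).1 hm with ⟨hmL, -⟩ | ⟨rfl, -⟩ | ⟨rfl, -⟩
      · exact hval m hmL
      · exact ⟨hve, hwse⟩
      · exact ⟨hve', hwse'⟩
    · intro m hm m' hm' hne
      rcases (hmemL' m).1 hm with ⟨hmL, hmne⟩ | ⟨rfl, hnpe⟩ | ⟨rfl, hnpe'⟩ <;>
        rcases (hmemL' m').1 hm' with ⟨hmL', hmne'⟩ | ⟨rfl, hnpe2⟩ | ⟨rfl, hnpe2'⟩
      · exact hnoov m hmL m' hmL' hne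
      · exact (aux_single_no_overlap G hpe (fun hmem => hnpe2 ⟨m, hmL, hmne, hmem⟩)).2
      · exact (aux_single_no_overlap G hpe' (fun hmem => hnpe2' ⟨m, hmL, hmne, hmem⟩)).2
      · exact (aux_single_no_overlap G hpe (fun hmem => hnpe ⟨m', hmL', hmne', hmem⟩)).1
      · exact absurd rfl hne
      · exact (aux_single_no_overlap G hpe hee').1
      · exact (aux_single_no_overlap G hpe' (fun hmem => hnpe' ⟨m', hmL', hmne', hmem⟩)).1
      · exact (aux_single_no_overlap G hpe hee').2
      · exact absurd rfl hne
  have hsecs : labeledSecs G L' = labeledSecs G L := by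
    ext x
    constructor
    · rintro ⟨hRSx, m, hm, hxm⟩
      rcases (hmemL' m).1 hm with ⟨hmL, -⟩ | ⟨rfl, -⟩ | ⟨rfl, -⟩
      · exact ⟨hRSx, m, hmL, hxm⟩
      · rw [hpe] at hxm
        have : x = e := by simpa using hxm
        subst this
        exact ⟨hRSx, ℓ, hℓ, hce⟩
      · rw [hpe'] at hxm
        have : x = e' := by simpa using hxm
        subst this
        exact ⟨hRSx, ℓ, hℓ, hce'⟩
    · rintro ⟨hRSx, m, hm, hxm⟩
      refine ⟨hRSx, ?_⟩
      by_cases hmℓ : m = ℓ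
      · subst hmℓ
        rcases hRSmem x hxm hRSx with rfl | rfl
        · by_cases hpeh : Pe
          · obtain ⟨m', hm'L, hm'ne, hm'x⟩ := hpeh
            exact ⟨m', (hmemL' m').2 (Or.inl ⟨hm'L, hm'ne⟩), hm'x⟩
          · exact ⟨ℓe, (hmemL' ℓe).2 (Or.inr (Or.inl ⟨rfl, hpeh⟩)), by rw [hpe]; simp⟩
        · by_cases hpeh : Pe'
          · obtain ⟨m', hm'L, hm'ne, hm'x⟩ := hpeh
            exact ⟨m', (hmemL' m').2 (Or.inl ⟨hm'L, hm'ne⟩), hm'x⟩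
          · exact ⟨ℓe', (hmemL' ℓe').2 (Or.inr (Or.inr ⟨rfl, hpeh⟩)), by rw [hpe']; simp⟩
      · exact ⟨m, (hmemL' m).2 (Or.inl ⟨hm, hmℓ⟩), hxm⟩
  have hcount : countLabeled G L' = countLabeled G L := by
    unfold countLabeled; rw [hsecs]
  have hnoj : ∀ m ∈ L', j ∉ m.path := by
    intro m hm hjm
    rcases (hmemL' m).1 hm with ⟨hmL, hmne⟩ | ⟨rfl, -⟩ | ⟨rfl, -⟩
    · exact hmne (hcsj m hmL hjm)
    · rw [hpe] at hjm
      exact hj ((by simpa using hjm : j = e) ▸ hrs)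
    · rw [hpe'] at hjm
      exact hj ((by simpa using hjm : j = e') ▸ he'.1)
  refine ⟨Or.inr ⟨L', hlab', ?_, hcount⟩, L', hlab', hcount, hnoj⟩
  intro m hm
  rcases (hmemL' m).1 hm with ⟨hmL, hmne⟩ | ⟨rfl, -⟩ | ⟨rfl, -⟩
  · exact Or.inl ⟨hmL, fun hh => hmne (by simpa using hh)⟩
  · exact Or.inr (Or.inl hpe)
  · exact Or.inr (Or.inr hpe')
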